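/- The bbuo-dual X~_bbuo is an order ideal of the order dual X~ contained in the order continuous dual X~_n, for any vector lattice X whose order dual separates points. -/

import Mathlib

set_option linter.unusedSectionVars false
set_option maxHeartbeats 1000000

open Filter Set

section ODual

variable (E : Type*) [AddCommGroup E] [Preorder E] [Module ℝ E]

/-- The order (bounded) dual: linear functionals bounded on order intervals. -/
noncomputable def obDual : Submodule ℝ (E →ₗ[ℝ] ℝ) where
  carrier := {f | ∀ w : E, ∃ M : ℝ, ∀ x : E, -w ≤ x → x ≤ w → |f x| ≤ M}
  zero_mem' := fun w => ⟨0, fun x _ _ => by simp⟩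
  add_mem' := fun {f g} hf hg w => by
    obtain ⟨M, hM⟩ := hf w
    obtain ⟨N, hN⟩ := hg w
    refine ⟨M + N, fun x h1 h2 => ?_⟩
    calc |(f + g) x| = |f x + g x| := by simp
    _ ≤ |f x| + |g x| := abs_add_le _ _
    _ ≤ M + N := add_le_add (hM x h1 h2) (hN x h1 h2)
  smul_mem' := fun c f hf => by
    intro w
    obtain ⟨M, hM⟩ := hf w
    refine ⟨|c| * M, fun x h1 h2 => ?_⟩
    calc |(c • f) x| = |c| * |f x| := by simp [abs_mul]
    _ ≤ |c| * M := mul_le_mul_of_nonneg_left (hM x h1 h2) (abs_nonneg c)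

/-- The pointwise-on-positive-elements (pre)order on a space of functionals. -/
instance instSubPre (Y : Submodule ℝ (E →ₗ[ℝ] ℝ)) : Preorder Y where
  le f g := ∀ x : E, 0 ≤ x → (f : E →ₗ[ℝ] ℝ) x ≤ (g : E →ₗ[ℝ] ℝ) x
  le_refl f x _ := le_rfl
  le_trans f g h h1 h2 x hx := (h1 x hx).trans (h2 x hx)

variable {E}

theorem subPre_le_iff {Y : Submodule ℝ (E →ₗ[ℝ] ℝ)} {f g : Y} :
    f ≤ g ↔ ∀ x : E, 0 ≤ x → (f : E →ₗ[ℝ] ℝ) x ≤ (g : E →ₗ[ℝ] ℝ) x := Iff.rfl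

/-- Order convergence of a net to a limit (sandwich form: eventually
`l - d ≤ x_α ≤ l + d` for every `d` in a set directed downward to `0`). -/
def OConvTo {ι : Type*} [Preorder ι] (x : ι → E) (l : E) : Prop :=
  ∃ D : Set E, D.Nonempty ∧ DirectedOn (· ≥ ·) D ∧ IsGLB D 0 ∧
    ∀ d ∈ D, ∃ α₀ : ι, ∀ α, α₀ ≤ α → l - d ≤ x α ∧ x α ≤ l + d

/-- Order continuity of a linear functional: `f(x_α) → 0` whenever `x_α ↓ 0`. -/
def OrdContE (f : E →ₗ[ℝ] ℝ) : Prop :=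
  ∀ D : Set E, D.Nonempty → DirectedOn (· ≥ ·) D → IsGLB D 0 →
    ∀ ε : ℝ, 0 < ε → ∃ d ∈ D, ∀ e ∈ D, e ≤ d → |f e| < ε

end ODual

section VL

variable (X : Type*) [Lattice X] [AddCommGroup X]
  [CovariantClass X X (· + ·) (· ≤ ·)] [Module ℝ X] [PosSMulMono ℝ X]

variable {X} in
/-- Unbounded order convergence: `|x_α - l| ⊓ u →o 0` for every `u ≥ 0`. -/
def uoConvTo {ι : Type*} [Preorder ι] (x : ι → X) (l : X) : Prop :=
  ∀ u : X, 0 ≤ u → OConvTo (fun α => |x α - l| ⊓ u) (0 : X)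

/-- The canonical evaluation of `x ∈ X` on a space `Y` of functionals on `X`. -/
def hatFun (Y : Submodule ℝ (X →ₗ[ℝ] ℝ)) (x : X) : Y →ₗ[ℝ] ℝ where
  toFun f := (f : X →ₗ[ℝ] ℝ) x
  map_add' f g := by simp
  map_smul' c f := by simp

theorem hatFun_mem (Y : Submodule ℝ (X →ₗ[ℝ] ℝ)) (x : X) :
    hatFun X Y x ∈ obDual Y := by
  intro w
  refine ⟨(w : X →ₗ[ℝ] ℝ) (x⁺) + (w : X →ₗ[ℝ] ℝ) (x⁻), fun f h1 h2 => ?_⟩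
  have hp : (0 : X) ≤ x⁺ := posPart_nonneg x
  have hn : (0 : X) ≤ x⁻ := negPart_nonneg x
  have e1 := (subPre_le_iff.mp h1) _ hp
  have e2 := (subPre_le_iff.mp h2) _ hp
  have e3 := (subPre_le_iff.mp h1) _ hn
  have e4 := (subPre_le_iff.mp h2) _ hn
  have c1 : -((w : X →ₗ[ℝ] ℝ) (x⁺)) ≤ (f : X →ₗ[ℝ] ℝ) (x⁺) := by simpa using e1
  have c3 : -((w : X →ₗ[ℝ] ℝ) (x⁻)) ≤ (f : X →ₗ[ℝ] ℝ) (x⁻) := by simpa using e3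
  have key : (f : X →ₗ[ℝ] ℝ) x
      = (f : X →ₗ[ℝ] ℝ) (x⁺) - (f : X →ₗ[ℝ] ℝ) (x⁻) := by
    rw [← map_sub, posPart_sub_negPart]
  show |(f : X →ₗ[ℝ] ℝ) x| ≤ _
  rw [key]
  have a1 : |(f : X →ₗ[ℝ] ℝ) (x⁺)| ≤ (w : X →ₗ[ℝ] ℝ) (x⁺) := abs_le.mpr ⟨c1, e2⟩
  have a2 : |(f : X →ₗ[ℝ] ℝ) (x⁻)| ≤ (w : X →ₗ[ℝ] ℝ) (x⁻) := abs_le.mpr ⟨c3, e4⟩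
  have := abs_sub ((f : X →ₗ[ℝ] ℝ) (x⁺)) ((f : X →ₗ[ℝ] ℝ) (x⁻))
  linarith

/-- The canonical embedding of `X` into the order dual of `Y ⊆ X~`. -/
def hatEl (Y : Submodule ℝ (X →ₗ[ℝ] ℝ)) (x : X) : obDual Y :=
  ⟨hatFun X Y x, hatFun_mem X Y x⟩

/-- `X~` separates the points of `X`. -/
def SepPoints : Prop := ∀ x : X, x ≠ 0 → ∃ f : obDual X, (f : X →ₗ[ℝ] ℝ) x ≠ 0

/-- The canonical image of `X` in `X~~` is a regular sublattice:
`x_α ↓ 0` in `X` implies `x̂_α ↓ 0` in `X~~`. -/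
def HatRegular : Prop :=
  ∀ D : Set X, D.Nonempty → DirectedOn (· ≥ ·) D → IsGLB D 0 →
    @IsGLB _ (instSubPre _ _).toLE (hatEl X (obDual X) '' D) (0 : obDual ↥(obDual X))

variable {X} in
/-- The net `x̂_α` is eventually order bounded in `X~~`. -/
def HatEvOB {ι : Type*} [Preorder ι] (x : ι → X) : Prop :=
  ∃ (b t : obDual ↥(obDual X)) (α₀ : ι), ∀ α, α₀ ≤ α →
    @LE.le _ (instSubPre _ _).toLE b (hatEl X (obDual X) (x α)) ∧ @LE.le _ (instSubPre _ _).toLE (hatEl X (obDual X) (x α)) t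

variable {X} in
/-- Bidual bounded uo-convergence. -/
def bbuoConvTo {ι : Type*} [Preorder ι] (x : ι → X) (l : X) : Prop :=
  uoConvTo x l ∧ HatEvOB x

/-- `X` has the `b`-property: every subset of `X` whose canonical image is
order bounded in `X~~` is order bounded in `X`. -/
def HasBProp : Prop :=
  ∀ A : Set X,
    (∃ b t : obDual ↥(obDual X), ∀ a ∈ A,
        @LE.le _ (instSubPre _ _).toLE b (hatEl X (obDual X) a) ∧ @LE.le _ (instSubPre _ _).toLE (hatEl X (obDual X) a) t) →
    ∃ b t : X, ∀ a ∈ A, b ≤ a ∧ a ≤ t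

/-- The Archimedean property for a lattice-ordered group. -/
def IsArch : Prop := ∀ x y : X, 0 ≤ x → (∀ n : ℕ, n • x ≤ y) → x = 0

end VL


/-- Membership in the `bbuo`-dual: `y(x_α) → 0` for every bbuo-null net. -/
def InBbuoDual {X : Type u} [Lattice X] [AddCommGroup X]
    [CovariantClass X X (· + ·) (· ≤ ·)] [Module ℝ X] [PosSMulMono ℝ X]
    (y : obDual X) : Prop :=
  ∀ (ι : Type u) [Preorder ι] [Nonempty ι] [IsDirected ι (· ≤ ·)] (x : ι → X),
    uoConvTo x 0 → HatEvOB x →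
    Filter.Tendsto (fun α => (y : X →ₗ[ℝ] ℝ) (x α)) Filter.atTop (nhds 0)


/-! ### Auxiliary development -/

section AuxRiesz

open Filter

/-- Data needed to run the Riesz–Kantorovich construction of a positive part of a
linear functional on a preordered real vector space. -/
structure RieszData (E : Type*) [AddCommGroup E] [Preorder E] [Module ℝ E] : Prop where
  addR : ∀ x y z : E, x ≤ y → x + z ≤ y + z
  smulP : ∀ (c : ℝ) (x y : E), 0 < c → x ≤ y → c • x ≤ c • y
  dec : ∀ w a b : E, 0 ≤ w → w ≤ a + b → 0 ≤ a → 0 ≤ b →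
    ∃ u v : E, 0 ≤ u ∧ u ≤ a ∧ 0 ≤ v ∧ v ≤ b ∧ w = u + v
  posgen : ∀ x w : E, -w ≤ x → x ≤ w →
    ∃ a b : E, 0 ≤ a ∧ a ≤ w ∧ 0 ≤ b ∧ b ≤ w + w ∧ x = a - b
  decomp : ∀ x : E, ∃ a b : E, 0 ≤ a ∧ 0 ≤ b ∧ x = a - b

namespace RieszData

variable {E : Type*} [AddCommGroup E] [Preorder E] [Module ℝ E]

theorem addBoth (R : RieszData E) {a b c d : E} (h1 : a ≤ b) (h2 : c ≤ d) :
    a + c ≤ b + d := by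
  have s1 := R.addR a b c h1
  have s2 := R.addR c d b h2
  rw [add_comm c b, add_comm d b] at s2
  exact s1.trans s2

theorem nonneg_add (R : RieszData E) {u v : E} (hu : 0 ≤ u) (hv : 0 ≤ v) :
    0 ≤ u + v := by
  have := R.addBoth hu hv
  simpa using this

theorem nonneg_half (R : RieszData E) {w : E} (h : -w ≤ w) : 0 ≤ w := by
  have h2 : (0 : E) ≤ w + w := by
    have := R.addR (-w) w w h
    simpa using this
  have e : ((2 : ℝ)⁻¹) • (w + w) = w := by
    rw [smul_add, ← add_smul]
    norm_num
  have h3 := R.smulP (2 : ℝ)⁻¹ 0 (w + w) (by norm_num) h2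
  rwa [smul_zero, e] at h3

theorem neg_nonpos' (R : RieszData E) {x : E} (h : 0 ≤ x) : -x ≤ 0 := by
  have := R.addR 0 x (-x) h
  simpa using this

theorem exists_posPart (R : RieszData E) (f : E →ₗ[ℝ] ℝ)
    (hfb : ∀ w : E, ∃ M : ℝ, ∀ x : E, -w ≤ x → x ≤ w → |f x| ≤ M) :
    ∃ F : E →ₗ[ℝ] ℝ,
      (∀ x : E, 0 ≤ x → IsLUB (f '' {v | 0 ≤ v ∧ v ≤ x}) (F x)) ∧
      (∀ w : E, ∃ M : ℝ, ∀ x : E, -w ≤ x → x ≤ w → |F x| ≤ M) := by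
  classical
  set S : E → Set ℝ := fun x => f '' {v | 0 ≤ v ∧ v ≤ x} with hS
  set p : E → ℝ := fun x => sSup (S x) with hpdef
  have hne : ∀ x : E, 0 ≤ x → (S x).Nonempty := by
    intro x hx
    exact ⟨f 0, ⟨0, ⟨le_refl 0, hx⟩, rfl⟩⟩
  have hbdd : ∀ x : E, 0 ≤ x → BddAbove (S x) := by
    intro x hx
    obtain ⟨M, hM⟩ := hfb x
    refine ⟨M, ?_⟩
    rintro r ⟨v, ⟨hv0, hvx⟩, rfl⟩
    exact (le_abs_self _).trans (hM v ((R.neg_nonpos' hx).trans hv0) hvx)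
  have hlub : ∀ x : E, 0 ≤ x → IsLUB (S x) (p x) :=
    fun x hx => isLUB_csSup (hne x hx) (hbdd x hx)
  have hmemle : ∀ x : E, 0 ≤ x → ∀ v : E, 0 ≤ v → v ≤ x → f v ≤ p x :=
    fun x hx v hv0 hvx => (hlub x hx).1 ⟨v, ⟨hv0, hvx⟩, rfl⟩
  have hleast : ∀ x : E, 0 ≤ x → ∀ M : ℝ, (∀ v : E, 0 ≤ v → v ≤ x → f v ≤ M) → p x ≤ M := by
    intro x hx M hM
    refine (hlub x hx).2 ?_
    rintro r ⟨v, ⟨hv0, hvx⟩, rfl⟩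
    exact hM v hv0 hvx
  have hp0 : ∀ x : E, 0 ≤ x → 0 ≤ p x := by
    intro x hx
    have := hmemle x hx 0 (le_refl 0) hx
    simpa using this
  have hmono : ∀ x y : E, 0 ≤ x → x ≤ y → p x ≤ p y := by
    intro x y hx hxy
    exact hleast x hx _ (fun v hv0 hvx => hmemle y (hx.trans hxy) v hv0 (hvx.trans hxy))
  have hadd : ∀ x y : E, 0 ≤ x → 0 ≤ y → p (x + y) = p x + p y := by
    intro x y hx hy
    have hxy : (0 : E) ≤ x + y := R.nonneg_add hx hy
    have h1 : p (x + y) ≤ p x + p y := by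
      refine hleast _ hxy _ ?_
      intro w hw0 hwxy
      obtain ⟨u, v, hu0, hua, hv0, hvb, rfl⟩ := R.dec w x y hw0 hwxy hx hy
      rw [map_add]
      exact add_le_add (hmemle x hx u hu0 hua) (hmemle y hy v hv0 hvb)
    have h2 : p x + p y ≤ p (x + y) := by
      have step : ∀ u : E, 0 ≤ u → u ≤ x → f u + p y ≤ p (x + y) := by
        intro u hu0 hux
        have hpy : p y ≤ p (x + y) - f u := by
          refine hleast y hy _ ?_
          intro v hv0 hvy
          have hfm : f u + f v ≤ p (x + y) := by
            rw [← map_add]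
            exact hmemle _ hxy (u + v) (R.nonneg_add hu0 hv0) (R.addBoth hux hvy)
          linarith
        linarith
      have hpx : p x ≤ p (x + y) - p y := by
        refine hleast x hx _ ?_
        intro u hu0 hux
        have := step u hu0 hux
        linarith
      linarith
    linarith
  have hsmul : ∀ (c : ℝ) (x : E), 0 < c → 0 ≤ x → p (c • x) = c * p x := by
    intro c x hc hx
    have hcx : (0 : E) ≤ c • x := by
      have := R.smulP c 0 x hc hx
      simpa using this
    have h1 : p (c • x) ≤ c * p x := by
      refine hleast _ hcx _ ?_
      intro v hv0 hvcx
      have hv' : (0 : E) ≤ c⁻¹ • v := by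
        have := R.smulP c⁻¹ 0 v (by positivity) hv0
        simpa using this
      have hvx : c⁻¹ • v ≤ x := by
        have := R.smulP c⁻¹ v (c • x) (by positivity) hvcx
        rwa [smul_smul, inv_mul_cancel₀ hc.ne', one_smul] at this
      have hrepr : v = c • (c⁻¹ • v) := by
        rw [smul_smul, mul_inv_cancel₀ hc.ne', one_smul]
      conv_lhs => rw [hrepr]
      rw [map_smul, smul_eq_mul]
      exact mul_le_mul_of_nonneg_left (hmemle x hx _ hv' hvx) hc.le
    have h2 : c * p x ≤ p (c • x) := by
      have hpx : p x ≤ c⁻¹ * p (c • x) := by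
        refine hleast x hx _ ?_
        intro v hv0 hvx
        have hm : f (c • v) ≤ p (c • x) := by
          refine hmemle _ hcx _ ?_ (R.smulP c v x hc hvx)
          have := R.smulP c 0 v hc hv0
          simpa using this
        rw [map_smul, smul_eq_mul] at hm
        have := mul_le_mul_of_nonneg_left hm (by positivity : (0:ℝ) ≤ c⁻¹)
        calc f v = c⁻¹ * (c * f v) := by field_simp
        _ ≤ c⁻¹ * p (c • x) := this
      calc c * p x ≤ c * (c⁻¹ * p (c • x)) := mul_le_mul_of_nonneg_left hpx hc.le
      _ = p (c • x) := by field_simp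
    linarith
  have hp00 : p 0 = 0 := by
    have h := hadd 0 0 (le_refl 0) (le_refl 0)
    rw [add_zero] at h
    linarith
  choose A B hA hB hAB using R.decomp
  set F0 : E → ℝ := fun x => p (A x) - p (B x) with hF0def
  have hwd : ∀ x u v : E, 0 ≤ u → 0 ≤ v → x = u - v → F0 x = p u - p v := by
    intro x u v hu hv hx
    have e : A x - B x = u - v := (hAB x).symm.trans hx
    have he : A x + v = u + B x := sub_eq_sub_iff_add_eq_add.mp e
    have h1 : p (A x) + p v = p u + p (B x) := by
      rw [← hadd _ _ (hA x) hv, ← hadd _ _ hu (hB x), he]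
    show p (A x) - p (B x) = p u - p v
    linarith
  have hFadd : ∀ x y : E, F0 (x + y) = F0 x + F0 y := by
    intro x y
    have h1 : F0 (x + y) = p (A x + A y) - p (B x + B y) := by
      apply hwd _ _ _ (R.nonneg_add (hA x) (hA y)) (R.nonneg_add (hB x) (hB y))
      conv_lhs => rw [hAB x, hAB y]
      abel
    rw [h1, hadd _ _ (hA x) (hA y), hadd _ _ (hB x) (hB y)]
    show _ = (p (A x) - p (B x)) + (p (A y) - p (B y))
    ring
  have hFsmul : ∀ (c : ℝ) (x : E), F0 (c • x) = c * F0 x := by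
    intro c x
    rcases lt_trichotomy c 0 with hc | hc | hc
    · have hc' : 0 < -c := by linarith
      have h1 : F0 (c • x) = p ((-c) • B x) - p ((-c) • A x) := by
        apply hwd
        · have := R.smulP (-c) 0 (B x) hc' (hB x); simpa using this
        · have := R.smulP (-c) 0 (A x) hc' (hA x); simpa using this
        · conv_lhs => rw [hAB x]
          module
      rw [h1, hsmul _ _ hc' (hB x), hsmul _ _ hc' (hA x)]
      show _ = c * (p (A x) - p (B x))
      ring
    · subst hc
      have h1 : F0 ((0:ℝ) • x) = p 0 - p 0 := hwd _ _ _ (le_refl 0) (le_refl 0) (by simp)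
      rw [h1, hp00]
      show (0:ℝ) - 0 = 0 * (p (A x) - p (B x))
      ring
    · have h1 : F0 (c • x) = p (c • A x) - p (c • B x) := by
        apply hwd
        · have := R.smulP c 0 (A x) hc (hA x); simpa using this
        · have := R.smulP c 0 (B x) hc (hB x); simpa using this
        · conv_lhs => rw [hAB x]
          module
      rw [h1, hsmul _ _ hc (hA x), hsmul _ _ hc (hB x)]
      show _ = c * (p (A x) - p (B x))
      ring
  have hFw : ∀ w : E, ∃ M : ℝ, ∀ x : E, -w ≤ x → x ≤ w → |F0 x| ≤ M := by
    intro w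
    by_cases hw : ∃ x : E, -w ≤ x ∧ x ≤ w
    · obtain ⟨x₀, hx₀1, hx₀2⟩ := hw
      have hw0 : (0 : E) ≤ w := R.nonneg_half (hx₀1.trans hx₀2)
      have hww : (0 : E) ≤ w + w := R.nonneg_add hw0 hw0
      refine ⟨p w + p (w + w), ?_⟩
      intro x h1 h2
      obtain ⟨a, b, ha0, haw, hb0, hbw, hxe⟩ := R.posgen x w h1 h2
      have hF : F0 x = p a - p b := hwd _ _ _ ha0 hb0 hxe
      have pa : p a ≤ p w := hmono _ _ ha0 haw
      have pb : p b ≤ p (w + w) := hmono _ _ hb0 hbw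
      have pa0 : 0 ≤ p a := hp0 _ ha0
      have pb0 : 0 ≤ p b := hp0 _ hb0
      have pw0 : 0 ≤ p w := hp0 _ hw0
      have pww0 : 0 ≤ p (w + w) := hp0 _ hww
      rw [hF, abs_le]
      constructor <;> linarith
    · refine ⟨0, ?_⟩
      intro x h1 h2
      exact absurd ⟨x, h1, h2⟩ hw
  refine ⟨{ toFun := F0, map_add' := hFadd,
            map_smul' := fun c x => by simpa using hFsmul c x }, ?_, hFw⟩
  intro x hx
  have hFx : F0 x = p x := by
    rw [hwd x x 0 hx (le_refl 0) (by simp), hp00]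
    ring
  show IsLUB (S x) (F0 x)
  rw [hFx]
  exact hlub x hx

end RieszData

theorem obDual_mem_iff {E : Type*} [AddCommGroup E] [Preorder E] [Module ℝ E]
    {f : E →ₗ[ℝ] ℝ} :
    f ∈ obDual E ↔ ∀ w : E, ∃ M : ℝ, ∀ x : E, -w ≤ x → x ≤ w → |f x| ≤ M :=
  Iff.rfl

section LatticeAux

variable {X : Type*} [Lattice X] [AddCommGroup X]
  [CovariantClass X X (· + ·) (· ≤ ·)] [Module ℝ X] [PosSMulMono ℝ X]

theorem lat_abs_nonneg (a : X) : (0 : X) ≤ |a| := by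
  rw [← posPart_add_negPart a]
  exact add_nonneg (posPart_nonneg a) (negPart_nonneg a)

theorem lat_half {w : X} (h : -w ≤ w) : (0 : X) ≤ w := by
  have h2 : (0 : X) ≤ w + w := by
    have := add_le_add_right h w
    simpa using this
  have e : ((2 : ℝ)⁻¹) • (w + w) = w := by
    rw [smul_add, ← add_smul]
    norm_num
  have h3 := smul_le_smul_of_nonneg_left h2 (by norm_num : (0:ℝ) ≤ (2:ℝ)⁻¹)
  rwa [smul_zero, e] at h3

theorem lat_posPart_le {a w : X} (h : a ≤ w) (hw : 0 ≤ w) : a⁺ ≤ w := by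
  rw [posPart_def]
  exact sup_le h hw

theorem lat_abs_of_nonneg {a : X} (h : 0 ≤ a) : |a| = a := by
  rw [← posPart_add_negPart a, negPart_eq_zero.mpr h, add_zero, posPart_eq_self.mpr h]

theorem lat_posPart_add_le (a b : X) : (a + b)⁺ ≤ a⁺ + b⁺ := by
  rw [posPart_def (a + b)]
  refine sup_le (add_le_add (le_posPart a) (le_posPart b)) ?_
  exact add_nonneg (posPart_nonneg a) (posPart_nonneg b)

theorem lat_smul_sup {c : ℝ} (hc : 0 < c) (a b : X) :
    c • (a ⊔ b) = (c • a) ⊔ (c • b) := by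
  apply le_antisymm
  · have h1 : a ≤ c⁻¹ • ((c • a) ⊔ (c • b)) := by
      have := smul_le_smul_of_nonneg_left (le_sup_left : c • a ≤ (c • a) ⊔ (c • b))
        (inv_nonneg.mpr hc.le)
      rwa [smul_smul, inv_mul_cancel₀ hc.ne', one_smul] at this
    have h2 : b ≤ c⁻¹ • ((c • a) ⊔ (c • b)) := by
      have := smul_le_smul_of_nonneg_left (le_sup_right : c • b ≤ (c • a) ⊔ (c • b))
        (inv_nonneg.mpr hc.le)
      rwa [smul_smul, inv_mul_cancel₀ hc.ne', one_smul] at this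
    have := smul_le_smul_of_nonneg_left (sup_le h1 h2) hc.le
    rwa [smul_smul, mul_inv_cancel₀ hc.ne', one_smul] at this
  · exact sup_le (smul_le_smul_of_nonneg_left le_sup_left hc.le)
      (smul_le_smul_of_nonneg_left le_sup_right hc.le)

theorem lat_smul_posPart {c : ℝ} (hc : 0 < c) (a : X) : (c • a)⁺ = c • a⁺ := by
  rw [posPart_def, posPart_def, lat_smul_sup hc, smul_zero]

theorem rieszData_lattice : RieszData X where
  addR x y z h := add_le_add h (le_refl z)
  smulP c x y hc h := smul_le_smul_of_nonneg_left h hc.le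
  dec w a b hw0 hwab ha0 hb0 := by
    refine ⟨w ⊓ a, w - w ⊓ a, le_inf hw0 ha0, inf_le_right, ?_, ?_, by abel⟩
    · rw [sub_nonneg]
      exact inf_le_left
    · rw [sub_inf]
      refine sup_le (by simpa using hb0) ?_
      rw [sub_le_iff_le_add, add_comm]
      exact hwab
  posgen x w h1 h2 := by
    have hw0 : (0 : X) ≤ w := lat_half (h1.trans h2)
    refine ⟨x⁺, x⁻, posPart_nonneg x, lat_posPart_le h2 hw0, negPart_nonneg x, ?_,
      (posPart_sub_negPart x).symm⟩
    have hnx : -x ≤ w := by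
      have h := add_le_add h1 (le_refl (w - x))
      have e1 : -w + (w - x) = -x := by abel
      have e2 : x + (w - x) = w := by abel
      rwa [e1, e2] at h
    have : x⁻ ≤ w := lat_posPart_le hnx hw0
    exact this.trans (le_add_of_nonneg_left hw0)
  decomp x := ⟨x⁺, x⁻, posPart_nonneg x, negPart_nonneg x, (posPart_sub_negPart x).symm⟩

theorem obd_nonneg_apply {φ : obDual X} (hφ : 0 ≤ φ) {v : X} (hv : 0 ≤ v) :
    0 ≤ (φ : X →ₗ[ℝ] ℝ) v := by
  have := subPre_le_iff.mp hφ v hv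
  simpa using this

theorem obd_mono {φ : obDual X} (hφ : 0 ≤ φ) {a b : X} (h : a ≤ b) :
    (φ : X →ₗ[ℝ] ℝ) a ≤ (φ : X →ₗ[ℝ] ℝ) b := by
  have h0 : 0 ≤ (φ : X →ₗ[ℝ] ℝ) (b - a) := obd_nonneg_apply hφ (sub_nonneg.mpr h)
  rw [map_sub] at h0
  linarith

/-- Riesz data for the order dual of a vector lattice. -/
theorem rieszData_dual : RieszData (↥(obDual X)) := by
  have haddR : ∀ x y z : ↥(obDual X), x ≤ y → x + z ≤ y + z := by
    intro x y z h
    refine subPre_le_iff.mpr (fun v hv => ?_)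
    simp only [Submodule.coe_add, LinearMap.add_apply]
    exact add_le_add (subPre_le_iff.mp h v hv) le_rfl
  have hsmulP : ∀ (c : ℝ) (x y : ↥(obDual X)), 0 < c → x ≤ y → c • x ≤ c • y := by
    intro c x y hc h
    refine subPre_le_iff.mpr (fun v hv => ?_)
    simp only [Submodule.coe_smul, LinearMap.smul_apply, smul_eq_mul]
    exact mul_le_mul_of_nonneg_left (subPre_le_iff.mp h v hv) hc.le
  have hposPart : ∀ φ : ↥(obDual X), ∃ a : ↥(obDual X),
      (∀ x : X, 0 ≤ x → IsLUB ((φ : X →ₗ[ℝ] ℝ) '' {v | 0 ≤ v ∧ v ≤ x})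
        ((a : X →ₗ[ℝ] ℝ) x)) := by
    intro φ
    obtain ⟨F, hF1, hF2⟩ := rieszData_lattice.exists_posPart (φ : X →ₗ[ℝ] ℝ)
      (obDual_mem_iff.mp φ.2)
    exact ⟨⟨F, obDual_mem_iff.mpr hF2⟩, hF1⟩
  refine ⟨haddR, hsmulP, ?_, ?_, ?_⟩
  · -- decomposition property
    intro ψ φ₁ φ₂ hψ0 hψle h1 h2
    obtain ⟨F, hF1, hF2⟩ := rieszData_lattice.exists_posPart
      ((ψ : X →ₗ[ℝ] ℝ) - (φ₁ : X →ₗ[ℝ] ℝ)) (obDual_mem_iff.mp (sub_mem ψ.2 φ₁.2))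
    set Ψ₂ : ↥(obDual X) := ⟨F, obDual_mem_iff.mpr hF2⟩ with hΨ₂
    have hmem : ∀ x : X, 0 ≤ x → ∀ v : X, 0 ≤ v → v ≤ x →
        (ψ : X →ₗ[ℝ] ℝ) v - (φ₁ : X →ₗ[ℝ] ℝ) v ≤ F x := by
      intro x hx v hv0 hvx
      have := (hF1 x hx).1 ⟨v, ⟨hv0, hvx⟩, rfl⟩
      simpa using this
    have hleast : ∀ x : X, 0 ≤ x → ∀ M : ℝ,
        (∀ v : X, 0 ≤ v → v ≤ x → (ψ : X →ₗ[ℝ] ℝ) v - (φ₁ : X →ₗ[ℝ] ℝ) v ≤ M) →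
        F x ≤ M := by
      intro x hx M hM
      refine (hF1 x hx).2 ?_
      rintro r ⟨v, ⟨hv0, hvx⟩, rfl⟩
      simpa using hM v hv0 hvx
    refine ⟨ψ - Ψ₂, Ψ₂, ?_, ?_, ?_, ?_, by abel⟩
    · refine subPre_le_iff.mpr (fun x hx => ?_)
      simp only [Submodule.coe_sub, LinearMap.sub_apply, Submodule.coe_zero,
        LinearMap.zero_apply]
      have : F x ≤ (ψ : X →ₗ[ℝ] ℝ) x := by
        refine hleast x hx _ (fun v hv0 hvx => ?_)
        have hφ₁v : 0 ≤ (φ₁ : X →ₗ[ℝ] ℝ) v := obd_nonneg_apply h1 hv0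
        have hψm : (ψ : X →ₗ[ℝ] ℝ) v ≤ (ψ : X →ₗ[ℝ] ℝ) x := obd_mono hψ0 hvx
        linarith
      linarith
    · refine subPre_le_iff.mpr (fun x hx => ?_)
      simp only [Submodule.coe_sub, LinearMap.sub_apply]
      have := hmem x hx x hx (le_refl x)
      linarith
    · refine subPre_le_iff.mpr (fun x hx => ?_)
      simp only [Submodule.coe_zero, LinearMap.zero_apply]
      have := hmem x hx 0 (le_refl 0) hx
      simpa using this
    · refine subPre_le_iff.mpr (fun x hx => ?_)
      show F x ≤ (φ₂ : X →ₗ[ℝ] ℝ) x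
      refine hleast x hx _ (fun v hv0 hvx => ?_)
      have hle := subPre_le_iff.mp hψle v hv0
      simp only [Submodule.coe_add, LinearMap.add_apply] at hle
      have := obd_mono h2 hvx
      linarith
  · -- posgen
    intro φ w h1 h2
    have hw0 : (0 : ↥(obDual X)) ≤ w := by
      refine subPre_le_iff.mpr (fun x hx => ?_)
      have ha := subPre_le_iff.mp h1 x hx
      have hb := subPre_le_iff.mp h2 x hx
      simp only [Submodule.coe_neg, LinearMap.neg_apply] at ha
      simp only [Submodule.coe_zero, LinearMap.zero_apply]
      linarith
    obtain ⟨F, hF1, hF2⟩ := rieszData_lattice.exists_posPart (φ : X →ₗ[ℝ] ℝ)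
      (obDual_mem_iff.mp φ.2)
    set a : ↥(obDual X) := ⟨F, obDual_mem_iff.mpr hF2⟩ with ha
    have hmem : ∀ x : X, 0 ≤ x → ∀ v : X, 0 ≤ v → v ≤ x →
        (φ : X →ₗ[ℝ] ℝ) v ≤ F x :=
      fun x hx v hv0 hvx => (hF1 x hx).1 ⟨v, ⟨hv0, hvx⟩, rfl⟩
    have hleast : ∀ x : X, 0 ≤ x → ∀ M : ℝ,
        (∀ v : X, 0 ≤ v → v ≤ x → (φ : X →ₗ[ℝ] ℝ) v ≤ M) → F x ≤ M := by
      intro x hx M hM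
      refine (hF1 x hx).2 ?_
      rintro r ⟨v, ⟨hv0, hvx⟩, rfl⟩
      exact hM v hv0 hvx
    refine ⟨a, a - φ, ?_, ?_, ?_, ?_, by abel⟩
    · refine subPre_le_iff.mpr (fun x hx => ?_)
      simp only [Submodule.coe_zero, LinearMap.zero_apply]
      have := hmem x hx 0 (le_refl 0) hx
      simpa using this
    · refine subPre_le_iff.mpr (fun x hx => ?_)
      show F x ≤ (w : X →ₗ[ℝ] ℝ) x
      refine hleast x hx _ (fun v hv0 hvx => ?_)
      have hφw := subPre_le_iff.mp h2 v hv0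
      have := obd_mono hw0 hvx
      linarith
    · refine subPre_le_iff.mpr (fun x hx => ?_)
      simp only [Submodule.coe_sub, LinearMap.sub_apply, Submodule.coe_zero,
        LinearMap.zero_apply]
      have := hmem x hx x hx (le_refl x)
      show (0:ℝ) ≤ F x - (φ : X →ₗ[ℝ] ℝ) x
      linarith
    · refine subPre_le_iff.mpr (fun x hx => ?_)
      simp only [Submodule.coe_sub, LinearMap.sub_apply, Submodule.coe_add,
        LinearMap.add_apply]
      have hFw : F x ≤ (w : X →ₗ[ℝ] ℝ) x := by
        refine hleast x hx _ (fun v hv0 hvx => ?_)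
        have hφw := subPre_le_iff.mp h2 v hv0
        have := obd_mono hw0 hvx
        linarith
      have hnφ := subPre_le_iff.mp h1 x hx
      simp only [Submodule.coe_neg, LinearMap.neg_apply] at hnφ
      show F x - (φ : X →ₗ[ℝ] ℝ) x ≤ _
      linarith
  · -- decomp
    intro φ
    obtain ⟨F, hF1, hF2⟩ := rieszData_lattice.exists_posPart (φ : X →ₗ[ℝ] ℝ)
      (obDual_mem_iff.mp φ.2)
    set a : ↥(obDual X) := ⟨F, obDual_mem_iff.mpr hF2⟩ with ha
    refine ⟨a, a - φ, ?_, ?_, by abel⟩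
    · refine subPre_le_iff.mpr (fun x hx => ?_)
      simp only [Submodule.coe_zero, LinearMap.zero_apply]
      have := (hF1 x hx).1 ⟨0, ⟨le_refl 0, hx⟩, rfl⟩
      simpa using this
    · refine subPre_le_iff.mpr (fun x hx => ?_)
      simp only [Submodule.coe_sub, LinearMap.sub_apply, Submodule.coe_zero,
        LinearMap.zero_apply]
      have := (hF1 x hx).1 ⟨x, ⟨hx, le_refl x⟩, rfl⟩
      show (0:ℝ) ≤ F x - (φ : X →ₗ[ℝ] ℝ) x
      linarith

/-- Hahn–Banach: for a positive functional `φ` and `x`, there is `0 ≤ ψ ≤ φ`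
with `ψ x = φ x⁺`. -/
theorem exists_eval_posPart (φ : obDual X) (hφ : 0 ≤ φ) (x : X) :
    ∃ ψ : obDual X, 0 ≤ ψ ∧ ψ ≤ φ ∧ (ψ : X →ₗ[ℝ] ℝ) x = (φ : X →ₗ[ℝ] ℝ) (x⁺) := by
  by_cases hx : x = 0
  · refine ⟨0, le_refl 0, hφ, ?_⟩
    subst hx
    simp
  · set N : X → ℝ := fun z => (φ : X →ₗ[ℝ] ℝ) (z⁺) with hN
    have hN0 : ∀ z : X, 0 ≤ N z := fun z => obd_nonneg_apply hφ (posPart_nonneg z)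
    have N_hom : ∀ c : ℝ, 0 < c → ∀ z : X, N (c • z) = c * N z := by
      intro c hc z
      show (φ : X →ₗ[ℝ] ℝ) ((c • z)⁺) = c * (φ : X →ₗ[ℝ] ℝ) (z⁺)
      rw [lat_smul_posPart hc, map_smul, smul_eq_mul]
    have N_add : ∀ z w : X, N (z + w) ≤ N z + N w := by
      intro z w
      show (φ : X →ₗ[ℝ] ℝ) ((z + w)⁺) ≤ _
      have := obd_mono hφ (lat_posPart_add_le z w)
      rwa [map_add] at this
    set f0 : X →ₗ.[ℝ] ℝ := LinearPMap.mkSpanSingleton x ((φ : X →ₗ[ℝ] ℝ) (x⁺)) hx with hf0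
    have hf : ∀ z : f0.domain, f0 z ≤ N z := by
      intro z
      obtain ⟨c, hc⟩ := Submodule.mem_span_singleton.mp z.2
      have hzz : (z : X) = c • x := hc.symm
      have hz : z = c • (⟨x, Submodule.mem_span_singleton_self x⟩ : f0.domain) :=
        Subtype.ext (by simpa using hzz)
      have hval : f0 z = c * (φ : X →ₗ[ℝ] ℝ) (x⁺) := by
        rw [hz, f0.map_smul, LinearPMap.mkSpanSingleton_apply, smul_eq_mul]
      rw [hval]
      rcases lt_trichotomy c 0 with h | h | h
      · have h1 : c * (φ : X →ₗ[ℝ] ℝ) (x⁺) ≤ 0 :=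
          mul_nonpos_of_nonpos_of_nonneg h.le (obd_nonneg_apply hφ (posPart_nonneg x))
        exact h1.trans (hN0 _)
      · subst h
        simpa using hN0 (z : X)
      · have hNz : N (z : X) = c * (φ : X →ₗ[ℝ] ℝ) (x⁺) := by
          rw [hzz, N_hom c h]
        exact le_of_eq hNz.symm
    obtain ⟨g, hg1, hg2⟩ := exists_extension_of_le_sublinear f0 N N_hom N_add hf
    have hgx : g x = (φ : X →ₗ[ℝ] ℝ) (x⁺) := by
      have := hg1 ⟨x, Submodule.mem_span_singleton_self x⟩
      rw [LinearPMap.mkSpanSingleton_apply] at this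
      exact this
    have hgneg : ∀ z : X, -g z ≤ N (-z) := by
      intro z
      have := hg2 (-z)
      rwa [map_neg] at this
    have hgmem : g ∈ obDual X := by
      intro w
      by_cases hww : ∃ z : X, -w ≤ z ∧ z ≤ w
      · obtain ⟨z₀, hz₀1, hz₀2⟩ := hww
        have hw0 : (0 : X) ≤ w := lat_half (hz₀1.trans hz₀2)
        refine ⟨(φ : X →ₗ[ℝ] ℝ) w, fun z h1 h2 => ?_⟩
        have hub : g z ≤ (φ : X →ₗ[ℝ] ℝ) w := by
          have := hg2 z
          have h3 : z⁺ ≤ w := lat_posPart_le h2 hw0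
          exact this.trans (obd_mono hφ h3)
        have hlb : -g z ≤ (φ : X →ₗ[ℝ] ℝ) w := by
          have := hgneg z
          have hnz : -z ≤ w := by
            have h := add_le_add h1 (le_refl (w - z))
            have e1 : -w + (w - z) = -z := by abel
            have e2 : z + (w - z) = w := by abel
            rwa [e1, e2] at h
          have h3 : (-z)⁺ ≤ w := lat_posPart_le hnz hw0
          exact this.trans (obd_mono hφ h3)
        rw [abs_le]
        constructor <;> linarith
      · exact ⟨0, fun z h1 h2 => absurd ⟨z, h1, h2⟩ hww⟩
    refine ⟨⟨g, hgmem⟩, ?_, ?_, hgx⟩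
    · refine subPre_le_iff.mpr (fun v hv => ?_)
      simp only [Submodule.coe_zero, LinearMap.zero_apply]
      have := hgneg v
      have hz : ((-v)⁺ : X) = 0 := posPart_eq_zero.mpr (neg_nonpos.mpr hv)
      show (0:ℝ) ≤ g v
      have hNv : N (-v) = 0 := by
        show (φ : X →ₗ[ℝ] ℝ) ((-v)⁺) = 0
        rw [hz, map_zero]
      rw [hNv] at this
      linarith
    · refine subPre_le_iff.mpr (fun v hv => ?_)
      have := hg2 v
      have hveq : (v⁺ : X) = v := posPart_eq_self.mpr hv
      show g v ≤ (φ : X →ₗ[ℝ] ℝ) v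
      calc g v ≤ N v := this
      _ = (φ : X →ₗ[ℝ] ℝ) v := by rw [hN]; simp only []; rw [hveq]
end LatticeAux

section MainAux

variable {X : Type u} [Lattice X] [AddCommGroup X]
  [CovariantClass X X (· + ·) (· ≤ ·)] [Module ℝ X] [PosSMulMono ℝ X]

/-- A net dominated in absolute value by a bbuo-null net is bbuo-null. -/
theorem bbuo_dominated {ι : Type u} [Preorder ι] (x w : ι → X)
    (hdom : ∀ α, |w α| ≤ |x α|) (hxuo : uoConvTo x 0) (hxob : HatEvOB x) :
    uoConvTo w 0 ∧ HatEvOB w := by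
  constructor
  · intro u hu
    obtain ⟨D, hDne, hDdir, hDglb, hDconv⟩ := hxuo u hu
    refine ⟨D, hDne, hDdir, hDglb, ?_⟩
    intro d hd
    obtain ⟨α₀, hα₀⟩ := hDconv d hd
    refine ⟨α₀, fun α hα => ?_⟩
    obtain ⟨h1, h2⟩ := hα₀ α hα
    have hd0 : (0 : X) ≤ d := hDglb.1 hd
    have habs : (0 : X) ≤ |w α - 0| ⊓ u := le_inf (lat_abs_nonneg _) hu
    constructor
    · calc (0:X) - d = -d := by abel
      _ ≤ 0 := neg_nonpos.mpr hd0
      _ ≤ |w α - 0| ⊓ u := habs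
    · calc |w α - 0| ⊓ u ≤ |x α - 0| ⊓ u := by
            refine inf_le_inf_right u ?_
            rw [sub_zero, sub_zero]
            exact hdom α
      _ ≤ 0 + d := h2
  · obtain ⟨b, t, α₀, hbt⟩ := hxob
    obtain ⟨T1, hT1lub, hT1w⟩ := rieszData_dual.exists_posPart
      (t : ↥(obDual X) →ₗ[ℝ] ℝ) (obDual_mem_iff.mp t.2)
    obtain ⟨T2, hT2lub, hT2w⟩ := rieszData_dual.exists_posPart
      (-(b : ↥(obDual X) →ₗ[ℝ] ℝ)) (obDual_mem_iff.mp (neg_mem b.2))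
    have hTmem : T1 + T2 ∈ obDual ↥(obDual X) := by
      refine obDual_mem_iff.mpr (fun v => ?_)
      obtain ⟨M1, hM1⟩ := hT1w v
      obtain ⟨M2, hM2⟩ := hT2w v
      refine ⟨M1 + M2, fun z h1 h2 => ?_⟩
      calc |(T1 + T2) z| = |T1 z + T2 z| := by rw [LinearMap.add_apply]
      _ ≤ |T1 z| + |T2 z| := abs_add_le _ _
      _ ≤ M1 + M2 := add_le_add (hM1 z h1 h2) (hM2 z h1 h2)
    set T : obDual ↥(obDual X) := ⟨T1 + T2, hTmem⟩ with hT
    refine ⟨-T, T, α₀, fun α hα => ?_⟩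
    obtain ⟨hb, ht⟩ := hbt α hα
    have key : ∀ φ : ↥(obDual X), 0 ≤ φ →
        (φ : X →ₗ[ℝ] ℝ) (|x α|) ≤ T1 φ + T2 φ := by
      intro φ hφ
      obtain ⟨ψ₁, hψ₁0, hψ₁φ, hψ₁x⟩ := exists_eval_posPart φ hφ (x α)
      obtain ⟨ψ₂, hψ₂0, hψ₂φ, hψ₂x⟩ := exists_eval_posPart φ hφ (-(x α))
      have h1 : (ψ₁ : X →ₗ[ℝ] ℝ) (x α) ≤ (t : ↥(obDual X) →ₗ[ℝ] ℝ) ψ₁ := by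
        have := subPre_le_iff.mp ht ψ₁ hψ₁0
        exact this
      have h2 : (ψ₂ : X →ₗ[ℝ] ℝ) (-(x α)) ≤ (-(b : ↥(obDual X) →ₗ[ℝ] ℝ)) ψ₂ := by
        have hbb := subPre_le_iff.mp hb ψ₂ hψ₂0
        rw [map_neg, LinearMap.neg_apply]
        have : (b : ↥(obDual X) →ₗ[ℝ] ℝ) ψ₂ ≤ (ψ₂ : X →ₗ[ℝ] ℝ) (x α) := hbb
        linarith
      have m1 : (t : ↥(obDual X) →ₗ[ℝ] ℝ) ψ₁ ≤ T1 φ :=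
        (hT1lub φ hφ).1 ⟨ψ₁, ⟨hψ₁0, hψ₁φ⟩, rfl⟩
      have m2 : (-(b : ↥(obDual X) →ₗ[ℝ] ℝ)) ψ₂ ≤ T2 φ :=
        (hT2lub φ hφ).1 ⟨ψ₂, ⟨hψ₂0, hψ₂φ⟩, rfl⟩
      have habs : (φ : X →ₗ[ℝ] ℝ) (|x α|) =
          (φ : X →ₗ[ℝ] ℝ) ((x α)⁺) + (φ : X →ₗ[ℝ] ℝ) ((x α)⁻) := by
        rw [← map_add, posPart_add_negPart]
      have hnegpp : (φ : X →ₗ[ℝ] ℝ) ((x α)⁻) = (φ : X →ₗ[ℝ] ℝ) ((-(x α))⁺) := rfl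
      rw [habs, hnegpp, ← hψ₁x, ← hψ₂x]
      linarith
    have hwabs : ∀ φ : ↥(obDual X), 0 ≤ φ →
        |(φ : X →ₗ[ℝ] ℝ) (w α)| ≤ T1 φ + T2 φ := by
      intro φ hφ
      have d1 : (φ : X →ₗ[ℝ] ℝ) (w α) ≤ (φ : X →ₗ[ℝ] ℝ) (|x α|) :=
        obd_mono hφ ((le_abs_self (w α)).trans (hdom α))
      have d2 : -(φ : X →ₗ[ℝ] ℝ) (w α) ≤ (φ : X →ₗ[ℝ] ℝ) (|x α|) := by
        have h := obd_mono hφ ((neg_le_abs (w α)).trans (hdom α))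
        rwa [map_neg] at h
      rw [abs_le]
      have := key φ hφ
      constructor <;> linarith
    constructor
    · refine subPre_le_iff.mpr (fun φ hφ => ?_)
      have h := hwabs φ hφ
      rw [abs_le] at h
      show (-(T1 + T2)) φ ≤ (φ : X →ₗ[ℝ] ℝ) (w α)
      rw [LinearMap.neg_apply, LinearMap.add_apply]
      linarith [h.1]
    · refine subPre_le_iff.mpr (fun φ hφ => ?_)
      have h := hwabs φ hφ
      rw [abs_le] at h
      show (φ : X →ₗ[ℝ] ℝ) (w α) ≤ (T1 + T2) φ
      rw [LinearMap.add_apply]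
      linarith [h.2]

end MainAux

/-- The `bbuo`-dual is an order ideal of `X~` contained in the order continuous
dual `X~ₙ`: it contains `0`, is closed under addition and scalar multiplication,
is solid in `X~`, and consists of order continuous functionals. -/
theorem statement11 {X : Type u} [Lattice X] [AddCommGroup X]
    [CovariantClass X X (· + ·) (· ≤ ·)] [Module ℝ X] [PosSMulMono ℝ X]
    (harch : IsArch X)
    (hsep : SepPoints X) :
    InBbuoDual (0 : obDual X)
    ∧ (∀ f g : obDual X, InBbuoDual f → InBbuoDual g → InBbuoDual (f + g))
    ∧ (∀ (c : ℝ) (f : obDual X), InBbuoDual f → InBbuoDual (c • f))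
    ∧ (∀ f g : obDual X, InBbuoDual f →
        (∀ x : X, 0 ≤ x → ∀ z : X, |z| ≤ x →
          |(g : X →ₗ[ℝ] ℝ) z| ≤
            sSup ((fun w => |(f : X →ₗ[ℝ] ℝ) w|) '' {w : X | |w| ≤ x})) →
        InBbuoDual g)
    ∧ (∀ f : obDual X, InBbuoDual f → OrdContE (f : X →ₗ[ℝ] ℝ)) := by
  classical
  have part0 : InBbuoDual (0 : obDual X) := by
    intro ι _ _ _ x _ _
    simp only [ZeroMemClass.coe_zero, LinearMap.zero_apply]
    exact tendsto_const_nhds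
  have partadd : ∀ f g : obDual X, InBbuoDual f → InBbuoDual g → InBbuoDual (f + g) := by
    intro f g hf hg ι _ _ _ x h1 h2
    have ht := (hf ι x h1 h2).add (hg ι x h1 h2)
    have heq : (fun α => ((f + g : obDual X) : X →ₗ[ℝ] ℝ) (x α)) =
        fun α => (f : X →ₗ[ℝ] ℝ) (x α) + (g : X →ₗ[ℝ] ℝ) (x α) := by
      funext α
      simp [Submodule.coe_add]
    rw [heq]
    simpa using ht
  have partsmul : ∀ (c : ℝ) (f : obDual X), InBbuoDual f → InBbuoDual (c • f) := by
    intro c f hf ι _ _ _ x h1 h2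
    have ht := (hf ι x h1 h2).const_mul c
    have heq : (fun α => ((c • f : obDual X) : X →ₗ[ℝ] ℝ) (x α)) =
        fun α => c * (f : X →ₗ[ℝ] ℝ) (x α) := by
      funext α
      simp [Submodule.coe_smul]
    rw [heq]
    simpa using ht
  have partsolid : ∀ f g : obDual X, InBbuoDual f →
      (∀ x : X, 0 ≤ x → ∀ z : X, |z| ≤ x →
        |(g : X →ₗ[ℝ] ℝ) z| ≤
          sSup ((fun w => |(f : X →ₗ[ℝ] ℝ) w|) '' {w : X | |w| ≤ x})) →
      InBbuoDual g := by
    intro f g hf hsol ι _ _ _ x hxuo hxob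
    by_contra hcon
    rw [NormedAddCommGroup.tendsto_nhds_zero] at hcon
    push_neg at hcon
    obtain ⟨ε, hε, hfreq⟩ := hcon
    have hfreq : ∃ᶠ α in Filter.atTop, ¬ ‖(g : X →ₗ[ℝ] ℝ) (x α)‖ < ε :=
      hfreq.mono (fun α h => not_lt.mpr h)
    set wn : ι → X := fun α =>
      if h : ∃ v : X, |v| ≤ |x α| ∧ ε / 2 < |(f : X →ₗ[ℝ] ℝ) v| then h.choose else 0
      with hwn
    have hdom : ∀ α, |wn α| ≤ |x α| := by
      intro α
      by_cases h : ∃ v : X, |v| ≤ |x α| ∧ ε / 2 < |(f : X →ₗ[ℝ] ℝ) v|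
      · rw [hwn]
        simp only [dif_pos h]
        exact h.choose_spec.1
      · rw [hwn]
        simp only [dif_neg h]
        rw [lat_abs_of_nonneg (le_refl (0 : X))]
        exact lat_abs_nonneg _
    obtain ⟨hwuo, hwob⟩ := bbuo_dominated x wn hdom hxuo hxob
    have htend := hf ι wn hwuo hwob
    rw [NormedAddCommGroup.tendsto_nhds_zero] at htend
    have hev := htend (ε / 2) (by linarith)
    have hfreq2 : ∃ᶠ α in Filter.atTop, ε / 2 < |(f : X →ₗ[ℝ] ℝ) (wn α)| := by
      refine hfreq.mono ?_
      intro α hα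
      have hge : ε ≤ |(g : X →ₗ[ℝ] ℝ) (x α)| := by
        rw [Real.norm_eq_abs] at hα
        exact not_lt.mp hα
      have hb := hsol (|x α|) (lat_abs_nonneg (x α)) (x α) (le_refl _)
      have hne : ((fun w => |(f : X →ₗ[ℝ] ℝ) w|) '' {w : X | |w| ≤ |x α|}).Nonempty := by
        refine ⟨|(f : X →ₗ[ℝ] ℝ) 0|, ⟨0, ?_, rfl⟩⟩
        show |(0 : X)| ≤ |x α|
        rw [lat_abs_of_nonneg (le_refl (0 : X))]
        exact lat_abs_nonneg _
      have hlt : ε / 2 <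
          sSup ((fun w => |(f : X →ₗ[ℝ] ℝ) w|) '' {w : X | |w| ≤ |x α|}) :=
        lt_of_lt_of_le (by linarith) (hge.trans hb)
      obtain ⟨r, hrmem, hr⟩ := exists_lt_of_lt_csSup hne hlt
      obtain ⟨v, hv, rfl⟩ := hrmem
      have hex : ∃ v : X, |v| ≤ |x α| ∧ ε / 2 < |(f : X →ₗ[ℝ] ℝ) v| := ⟨v, hv, hr⟩
      have hwα : wn α = hex.choose := by
        rw [hwn]
        simp only [dif_pos hex]
      rw [hwα]
      exact hex.choose_spec.2
    obtain ⟨α, h1, h2⟩ := (hfreq2.and_eventually hev).exists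
    rw [Real.norm_eq_abs] at h2
    linarith
  have partoc : ∀ f : obDual X, InBbuoDual f → OrdContE (f : X →ₗ[ℝ] ℝ) := by
    intro f hf D hDne hDdir hDglb ε hε
    set ι : Type u := (↥D)ᵒᵈ with hι
    haveI : Nonempty ι := ⟨OrderDual.toDual ⟨hDne.choose, hDne.choose_spec⟩⟩
    haveI hdir : IsDirected ι (· ≤ ·) := by
      constructor
      intro a b
      obtain ⟨c, hcD, hca, hcb⟩ := hDdir ((OrderDual.ofDual a : ↥D) : X)
        (OrderDual.ofDual a).2 ((OrderDual.ofDual b : ↥D) : X) (OrderDual.ofDual b).2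
      exact ⟨OrderDual.toDual ⟨c, hcD⟩, hca, hcb⟩
    set xnet : ι → X := fun α => ((OrderDual.ofDual α : ↥D) : X) with hxnet
    have hmemD : ∀ α : ι, xnet α ∈ D := fun α => (OrderDual.ofDual α).2
    have hpos : ∀ α, (0 : X) ≤ xnet α := fun α => hDglb.1 (hmemD α)
    have hled : ∀ (d : X) (hd : d ∈ D) (α : ι),
        OrderDual.toDual (⟨d, hd⟩ : ↥D) ≤ α → xnet α ≤ d := fun d hd α hα => hα
    have huo : uoConvTo xnet 0 := by
      intro u hu
      refine ⟨D, ⟨hDne.choose, hDne.choose_spec⟩, hDdir, hDglb, fun d hd => ?_⟩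
      refine ⟨OrderDual.toDual ⟨d, hd⟩, fun α hα => ?_⟩
      have h0 : (0 : X) ≤ d := hDglb.1 hd
      have hxd : xnet α ≤ d := hled d hd α hα
      constructor
      · have habs : (0 : X) ≤ |xnet α - 0| ⊓ u := le_inf (lat_abs_nonneg _) hu
        calc (0 : X) - d = -d := by abel
        _ ≤ 0 := neg_nonpos.mpr h0
        _ ≤ _ := habs
      · calc |xnet α - 0| ⊓ u ≤ |xnet α - 0| := inf_le_left
        _ = xnet α := by rw [sub_zero, lat_abs_of_nonneg (hpos α)]
        _ ≤ d := hxd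
        _ = 0 + d := (zero_add d).symm
    obtain ⟨d₀, hd₀⟩ := hDne
    have hob : HatEvOB xnet := by
      refine ⟨0, hatEl X (obDual X) d₀, OrderDual.toDual ⟨d₀, hd₀⟩, fun α hα => ?_⟩
      constructor
      · refine subPre_le_iff.mpr (fun φ hφ => ?_)
        simp only [Submodule.coe_zero, LinearMap.zero_apply]
        exact obd_nonneg_apply hφ (hpos α)
      · refine subPre_le_iff.mpr (fun φ hφ => ?_)
        show (φ : X →ₗ[ℝ] ℝ) (xnet α) ≤ (φ : X →ₗ[ℝ] ℝ) d₀
        exact obd_mono hφ (hled d₀ hd₀ α hα)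
    have htend := hf ι xnet huo hob
    rw [NormedAddCommGroup.tendsto_nhds_zero] at htend
    have hev := htend ε hε
    rw [Filter.atTop_basis.eventually_iff] at hev
    obtain ⟨α₀, -, hα₀⟩ := hev
    refine ⟨((OrderDual.ofDual α₀ : ↥D) : X), (OrderDual.ofDual α₀).2, fun e he hle => ?_⟩
    have h := hα₀ (show OrderDual.toDual (⟨e, he⟩ : ↥D) ∈ Set.Ici α₀ from hle)
    rw [Real.norm_eq_abs] at h
    exact h
  exact ⟨part0, partadd, partsmul, partsolid, partoc⟩
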